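/- The map Λ_μ : M_d(ℂ) → M_d(ℂ) defined by Λ_μ(σ) = Tr(σ) I_d − μ σ is k-positive if and only if μ ≤ 1/k (for μ ≥ 0 and 1 ≤ k ≤ d). -/

import Mathlib

open Matrix BigOperators
open scoped ComplexOrder

/-- The ampliation id_n ⊗ Λ of a map Λ on M_d, acting blockwise. -/
def idTensor (n d : ℕ) (Λ : Matrix (Fin d) (Fin d) ℂ → Matrix (Fin d) (Fin d) ℂ)
    (σ : Matrix (Fin n × Fin d) (Fin n × Fin d) ℂ) :
    Matrix (Fin n × Fin d) (Fin n × Fin d) ℂ :=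
  Matrix.of fun p q => Λ (Matrix.of fun i j => σ (p.1, i) (q.1, j)) p.2 q.2

/-- Λ is k-positive: id_{M_k} ⊗ Λ preserves positive semidefiniteness. -/
def kPositive (k d : ℕ) (Λ : Matrix (Fin d) (Fin d) ℂ → Matrix (Fin d) (Fin d) ℂ) : Prop :=
  ∀ σ : Matrix (Fin k × Fin d) (Fin k × Fin d) ℂ,
    σ.PosSemidef → (idTensor k d Λ σ).PosSemidef

open scoped InnerProductSpace

section Helpers

section PSDAux
open scoped MatrixOrder

lemma Matrix.posSemidef_iff_eq_transpose_mul_self {n : Type*} [Fintype n] [DecidableEq n]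
    {A : Matrix n n ℂ} : A.PosSemidef ↔ ∃ B : Matrix n n ℂ, A = Bᴴ * B := by
  constructor
  · intro hA
    refine ⟨CFC.sqrt A, ?_⟩
    rw [(CFC.sqrt_nonneg A).posSemidef.isHermitian.eq, CFC.sqrt_mul_sqrt_self A hA.nonneg]
  · rintro ⟨B, rfl⟩
    exact Matrix.posSemidef_conjTranspose_mul_self B

end PSDAux

lemma star_mul_self_eq' (z : ℂ) : star z * z = ((‖z‖ ^ 2 : ℝ) : ℂ) := by
  rw [show (star z) = (starRingEnd ℂ) z from rfl, ← Complex.normSq_eq_conj_mul_self,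
    Complex.normSq_eq_norm_sq]

lemma cs_complex' {ι : Type*} [Fintype ι] (f g : ι → ℂ) :
    ‖∑ i, (starRingEnd ℂ) (f i) * g i‖ ^ 2 ≤ (∑ i, ‖f i‖ ^ 2) * (∑ i, ‖g i‖ ^ 2) := by
  let F : EuclideanSpace ℂ ι := WithLp.toLp 2 f
  let G : EuclideanSpace ℂ ι := WithLp.toLp 2 g
  have h1 : ⟪F, G⟫_ℂ = ∑ i, (starRingEnd ℂ) (f i) * g i := by
    simp [F, G, PiLp.inner_apply, RCLike.inner_apply, mul_comm]
  have h2 := norm_inner_le_norm (𝕜 := ℂ) F G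
  have hF : ‖F‖ ^ 2 = ∑ i, ‖f i‖ ^ 2 := by
    rw [EuclideanSpace.norm_eq, Real.sq_sqrt (by positivity)]
  have hG : ‖G‖ ^ 2 = ∑ i, ‖g i‖ ^ 2 := by
    rw [EuclideanSpace.norm_eq, Real.sq_sqrt (by positivity)]
  calc ‖∑ i, (starRingEnd ℂ) (f i) * g i‖ ^ 2 = ‖⟪F, G⟫_ℂ‖ ^ 2 := by rw [h1]
    _ ≤ (‖F‖ * ‖G‖) ^ 2 := by
        apply pow_le_pow_left₀ (norm_nonneg _) h2
    _ = (∑ i, ‖f i‖ ^ 2) * (∑ i, ‖g i‖ ^ 2) := by rw [mul_pow, hF, hG]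

lemma trace_conjTranspose_mul_self' {m n : Type*} [Fintype m] [Fintype n]
    (P : Matrix m n ℂ) :
    (Pᴴ * P).trace = ((∑ q, ∑ i, ‖P q i‖ ^ 2 : ℝ) : ℂ) := by
  simp only [Matrix.trace, Matrix.diag, Matrix.mul_apply, Matrix.conjTranspose_apply]
  rw [Finset.sum_comm]
  push_cast
  exact Finset.sum_congr rfl fun q _ => Finset.sum_congr rfl fun i _ => by
    rw [star_mul_self_eq']; push_cast; ring

lemma trace_conjTranspose_mul' {m n : Type*} [Fintype m] [Fintype n]
    (P Q : Matrix m n ℂ) :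
    (Pᴴ * Q).trace = ∑ x : m × n, (starRingEnd ℂ) (P x.1 x.2) * Q x.1 x.2 := by
  simp only [Matrix.trace, Matrix.diag, Matrix.mul_apply, Matrix.conjTranspose_apply]
  rw [Finset.sum_comm, ← Finset.sum_product']
  rfl

/-- Frobenius Cauchy–Schwarz for the trace pairing. -/
lemma trace_cs' {m n : Type*} [Fintype m] [Fintype n] (P Q : Matrix m n ℂ) :
    ‖(Pᴴ * Q).trace‖ ^ 2 ≤ (∑ q, ∑ i, ‖P q i‖ ^ 2) * (∑ q, ∑ i, ‖Q q i‖ ^ 2) := by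
  rw [trace_conjTranspose_mul']
  have := cs_complex' (ι := m × n) (fun x => P x.1 x.2) (fun x => Q x.1 x.2)
  simpa [Fintype.sum_prod_type] using this

/-- trace of a PSD complex matrix has nonnegative real part. -/
lemma trace_re_nonneg' {n : Type*} [Fintype n] [DecidableEq n] {M : Matrix n n ℂ}
    (hM : M.PosSemidef) : 0 ≤ M.trace.re := by
  have h : ∀ i, 0 ≤ (M i i).re := by
    intro i
    have := hM.dotProduct_mulVec_nonneg (Pi.single i 1)
    have h2 : star (Pi.single i 1) ⬝ᵥ M *ᵥ (Pi.single i (1:ℂ)) = M i i := by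
      simp [Matrix.mulVec_single, dotProduct, Pi.single_apply, Finset.mul_sum]
    rw [h2] at this
    exact (Complex.le_def.mp this).1
  simpa [Matrix.trace, Complex.re_sum] using Finset.sum_nonneg fun i _ => h i

/-- Key rank-k trace inequality. -/
lemma key_trace' (k d : ℕ) (hk : 1 ≤ k) (X V : Matrix (Fin k) (Fin d) ℂ) :
    ‖(Xᴴ * V).trace‖ ^ 2 ≤ k * ∑ m, ∑ i, ‖(Xᴴ * V) m i‖ ^ 2 := by
  obtain ⟨S, hS⟩ : ∃ s : ℝ, (∑ m, ∑ i, ‖(Xᴴ * V) m i‖ ^ 2) = s := ⟨_, rfl⟩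
  obtain ⟨TV, hTV⟩ : ∃ t : ℝ, (∑ q, ∑ i, ‖V q i‖ ^ 2) = t := ⟨_, rfl⟩
  rw [hS]
  have hTVnn : 0 ≤ TV := hTV ▸ (Finset.sum_nonneg fun q _ => Finset.sum_nonneg fun i _ => by positivity)
  have main : ∀ ε : ℝ, 0 < ε → ‖(Xᴴ * V).trace‖ ^ 2 ≤ k * S + ε * (k * TV) := by
    intro ε hε
    obtain ⟨A, hA⟩ : ∃ B : Matrix (Fin k) (Fin k) ℂ, B = X * Xᴴ + (ε : ℂ) • 1 := ⟨_, rfl⟩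
    have hXXh : (X * Xᴴ).PosSemidef := Matrix.posSemidef_self_mul_conjTranspose X
    have hone : ((ε : ℂ) • (1 : Matrix (Fin k) (Fin k) ℂ)).PosDef := by
      rw [Matrix.smul_one_eq_diagonal]
      exact Matrix.PosDef.diagonal fun i => by exact_mod_cast hε
    have hApd : A.PosDef := hA ▸ Matrix.PosDef.posSemidef_add hXXh hone
    have hdet : IsUnit A.det := (Matrix.isUnit_iff_isUnit_det A).mp hApd.isUnit
    have hinv_mul : A⁻¹ * A = 1 := Matrix.nonsing_inv_mul A hdet
    have hmul_inv : A * A⁻¹ = 1 := Matrix.mul_nonsing_inv A hdet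
    have hAinvpd : A⁻¹.PosDef := hApd.inv
    have hAinvherm : A⁻¹ᴴ = A⁻¹ := hAinvpd.isHermitian
    obtain ⟨C, hC⟩ := Matrix.posSemidef_iff_eq_transpose_mul_self.mp hApd.posSemidef
    obtain ⟨P, hP⟩ : ∃ B : Matrix (Fin k) (Fin d) ℂ, B = C * (A⁻¹ * X) := ⟨_, rfl⟩
    obtain ⟨Q, hQ⟩ : ∃ B : Matrix (Fin k) (Fin d) ℂ, B = C * V := ⟨_, rfl⟩
    have hPQ : Pᴴ * Q = Xᴴ * V := by
      rw [hP, hQ, Matrix.conjTranspose_mul, Matrix.conjTranspose_mul, hAinvherm]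
      calc Xᴴ * A⁻¹ * Cᴴ * (C * V) = Xᴴ * A⁻¹ * (Cᴴ * C) * V := by
            simp only [Matrix.mul_assoc]
        _ = Xᴴ * V := by rw [← hC, Matrix.mul_assoc Xᴴ, hinv_mul, Matrix.mul_one]
    have hPP : Pᴴ * P = Xᴴ * (A⁻¹ * X) := by
      rw [hP, Matrix.conjTranspose_mul, Matrix.conjTranspose_mul, hAinvherm]
      calc Xᴴ * A⁻¹ * Cᴴ * (C * (A⁻¹ * X)) = Xᴴ * A⁻¹ * (Cᴴ * C) * (A⁻¹ * X) := by
            simp only [Matrix.mul_assoc]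
        _ = Xᴴ * (A⁻¹ * X) := by
            rw [← hC, Matrix.mul_assoc Xᴴ, hinv_mul, Matrix.mul_one]
    have htrP : (Pᴴ * P).trace = (k : ℂ) - (ε : ℂ) * A⁻¹.trace := by
      rw [hPP, Matrix.trace_mul_comm, Matrix.mul_assoc]
      have hXX : X * Xᴴ = A - (ε : ℂ) • 1 := by rw [hA]; rw [add_sub_cancel_right]
      rw [hXX, Matrix.mul_sub, Matrix.trace_sub, hinv_mul, Matrix.trace_one,
        Matrix.mul_smul, Matrix.mul_one, Matrix.trace_smul]
      simp [smul_eq_mul]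
    have hreP : (∑ q, ∑ i, ‖P q i‖ ^ 2) ≤ (k : ℝ) := by
      have h1 : ((∑ q, ∑ i, ‖P q i‖ ^ 2 : ℝ) : ℂ) = (Pᴴ * P).trace :=
        (trace_conjTranspose_mul_self' P).symm
      have h2 : (Pᴴ * P).trace.re = (k : ℝ) - ε * A⁻¹.trace.re := by
        rw [htrP]; simp
      have h3 : 0 ≤ A⁻¹.trace.re := trace_re_nonneg' hAinvpd.posSemidef
      have h4 : (∑ q, ∑ i, ‖P q i‖ ^ 2 : ℝ) = (Pᴴ * P).trace.re := by
        rw [← h1, Complex.ofReal_re]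
      rw [h4, h2]
      nlinarith
    have hreQ : (∑ q, ∑ i, ‖Q q i‖ ^ 2) = S + ε * TV := by
      have h1 : ((∑ q, ∑ i, ‖Q q i‖ ^ 2 : ℝ) : ℂ) = (Qᴴ * Q).trace :=
        (trace_conjTranspose_mul_self' Q).symm
      have hQQ : Qᴴ * Q = (Xᴴ * V)ᴴ * (Xᴴ * V) + (ε : ℂ) • (Vᴴ * V) := by
        rw [hQ, Matrix.conjTranspose_mul]
        calc Vᴴ * Cᴴ * (C * V) = Vᴴ * (Cᴴ * C) * V := by simp only [Matrix.mul_assoc]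
          _ = Vᴴ * A * V := by rw [← hC]
          _ = _ := by
              rw [hA, Matrix.mul_add, Matrix.add_mul, Matrix.conjTranspose_mul,
                Matrix.conjTranspose_conjTranspose]
              congr 1
              · simp only [Matrix.mul_assoc]
              · rw [Matrix.mul_smul, Matrix.mul_one, Matrix.smul_mul]
      have h2 : (Qᴴ * Q).trace = ((S : ℝ) : ℂ) + (ε : ℂ) * ((TV : ℝ) : ℂ) := by
        rw [hQQ, Matrix.trace_add, Matrix.trace_smul, trace_conjTranspose_mul_self',
          trace_conjTranspose_mul_self']
        rw [← hS, ← hTV]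
        simp [smul_eq_mul]
      have := h1.trans h2
      exact_mod_cast this
    calc ‖(Xᴴ * V).trace‖ ^ 2 = ‖(Pᴴ * Q).trace‖ ^ 2 := by rw [hPQ]
      _ ≤ (∑ q, ∑ i, ‖P q i‖ ^ 2) * (∑ q, ∑ i, ‖Q q i‖ ^ 2) := trace_cs' P Q
      _ ≤ (k : ℝ) * (S + ε * TV) := by
          apply mul_le_mul hreP (le_of_eq hreQ) ?_ (by positivity)
          exact Finset.sum_nonneg fun q _ => Finset.sum_nonneg fun i _ => by positivity
      _ = k * S + ε * (k * TV) := by ring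
  refine le_of_forall_pos_le_add fun δ hδ => ?_
  have hden : (0:ℝ) < k * TV + 1 := by positivity
  have h := main (δ / (k * TV + 1)) (by positivity)
  have h2 : δ / (k * TV + 1) * (k * TV) ≤ δ := by
    rw [div_mul_eq_mul_div, div_le_iff₀ hden]
    have hTVnn' : 0 ≤ (k:ℝ) * TV := by positivity
    nlinarith
  linarith

lemma key_sums' (k d : ℕ) (hk : 1 ≤ k) (v b : Fin k → Fin d → ℂ) :
    ‖∑ q, ∑ m, v q m * b q m‖ ^ 2 ≤ k * ∑ i, ∑ m, ‖∑ q, v q i * b q m‖ ^ 2 := by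
  have h := key_trace' k d hk (Matrix.of fun q m => (starRingEnd ℂ) (b q m))
    (Matrix.of fun q i => v q i)
  have hentry : ∀ m i, ((Matrix.of fun q m => (starRingEnd ℂ) (b q m))ᴴ *
      (Matrix.of fun q i => v q i)) m i = ∑ q, v q i * b q m := by
    intro m i
    simp [Matrix.mul_apply, Matrix.conjTranspose_apply, mul_comm]
  have htr : ((Matrix.of fun q m => (starRingEnd ℂ) (b q m))ᴴ *
      (Matrix.of fun q i => v q i)).trace = ∑ q, ∑ m, v q m * b q m := by
    simp only [Matrix.trace, Matrix.diag]
    rw [Finset.sum_comm]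
    exact Finset.sum_congr rfl fun q _ => by rw [hentry]
  have h2 : (∑ m, ∑ i, ‖((Matrix.of fun q m => (starRingEnd ℂ) (b q m))ᴴ *
      (Matrix.of fun q i => v q i)) m i‖ ^ 2)
      = ∑ i, ∑ m, ‖∑ q, v q i * b q m‖ ^ 2 := by
    rw [Finset.sum_comm]
    exact Finset.sum_congr rfl fun i _ => Finset.sum_congr rfl fun m _ => by rw [hentry]
  rw [htr, h2] at h
  exact h

/-- Expansion of the quadratic form of the ampliated map on `Bᴴ B`. -/
lemma expand_quadratic (k d : ℕ) (μ : ℝ) {ι : Type*} [Fintype ι]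
    (B : Matrix ι (Fin k × Fin d) ℂ) (v : Fin k × Fin d → ℂ) :
    star v ⬝ᵥ (idTensor k d
        (fun σ => σ.trace • (1 : Matrix (Fin d) (Fin d) ℂ) - (μ : ℂ) • σ) (Bᴴ * B)) *ᵥ v
      = ((∑ R, ((∑ i, ∑ m, ‖∑ q, v (q, i) * B R (q, m)‖ ^ 2)
          - μ * ‖∑ Q, v Q * B R Q‖ ^ 2) : ℝ) : ℂ) := by
  have hM : idTensor k d
        (fun σ => σ.trace • (1 : Matrix (Fin d) (Fin d) ℂ) - (μ : ℂ) • σ) (Bᴴ * B)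
      = (Matrix.of fun P Q => (∑ m, (Bᴴ * B) (P.1, m) (Q.1, m)) * (if P.2 = Q.2 then 1 else 0))
        - (μ : ℂ) • (Bᴴ * B) := by
    ext ⟨p, i⟩ ⟨q, j⟩
    simp [idTensor, Matrix.one_apply, Matrix.trace, Matrix.diag, Matrix.sub_apply,
      Matrix.smul_apply, smul_eq_mul, mul_ite, mul_one, mul_zero]
  rw [hM, Matrix.sub_mulVec, dotProduct_sub, Matrix.smul_mulVec, dotProduct_smul]
  have E1 : star v ⬝ᵥ (Matrix.of fun (P Q : Fin k × Fin d) =>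
        (∑ m, (Bᴴ * B) (P.1, m) (Q.1, m)) * (if P.2 = Q.2 then 1 else 0)) *ᵥ v
      = ((∑ R, ∑ i, ∑ m, ‖∑ q, v (q, i) * B R (q, m)‖ ^ 2 : ℝ) : ℂ) := by
    have L2 : star v ⬝ᵥ (Matrix.of fun (P Q : Fin k × Fin d) =>
          (∑ m, (Bᴴ * B) (P.1, m) (Q.1, m)) * (if P.2 = Q.2 then 1 else 0)) *ᵥ v
        = ∑ p, ∑ i, ∑ q, ∑ m, ∑ R,
            star (v (p, i)) * v (q, i) * (star (B R (p, m)) * B R (q, m)) := by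
      simp only [dotProduct, Matrix.mulVec, Pi.star_apply, Matrix.of_apply,
        Fintype.sum_prod_type, Matrix.mul_apply, Matrix.conjTranspose_apply,
        mul_ite, mul_one, mul_zero, ite_mul, zero_mul, Finset.sum_ite_eq,
        Finset.mem_univ, if_true]
      refine Finset.sum_congr rfl fun p _ => Finset.sum_congr rfl fun i _ => ?_
      rw [Finset.mul_sum]
      refine Finset.sum_congr rfl fun q _ => ?_
      rw [Finset.sum_mul, Finset.mul_sum]
      refine Finset.sum_congr rfl fun m _ => ?_
      rw [Finset.sum_mul, Finset.mul_sum]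
      refine Finset.sum_congr rfl fun R _ => ?_
      ring
    rw [L2]
    have R2 : ((∑ R, ∑ i, ∑ m, ‖∑ q, v (q, i) * B R (q, m)‖ ^ 2 : ℝ) : ℂ)
        = ∑ R, ∑ i, ∑ m, ∑ p, ∑ q,
            star (v (p, i)) * v (q, i) * (star (B R (p, m)) * B R (q, m)) := by
      simp only [Complex.ofReal_sum]
      refine Finset.sum_congr rfl fun R _ => Finset.sum_congr rfl fun i _ =>
        Finset.sum_congr rfl fun m _ => ?_
      rw [← star_mul_self_eq', star_sum, Finset.sum_mul_sum]
      refine Finset.sum_congr rfl fun p _ => Finset.sum_congr rfl fun q _ => ?_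
      rw [star_mul']
      ring
    rw [R2]
    conv_lhs => enter [2, p, 2, i, 2, q]; rw [Finset.sum_comm]
    conv_lhs => enter [2, p, 2, i]; rw [Finset.sum_comm]
    conv_lhs => enter [2, p]; rw [Finset.sum_comm]
    conv_lhs => rw [Finset.sum_comm]
    conv_lhs => enter [2, R]; rw [Finset.sum_comm]
    conv_lhs => enter [2, R, 2, i, 2, p]; rw [Finset.sum_comm]
    conv_lhs => enter [2, R, 2, i]; rw [Finset.sum_comm]
  have E2 : star v ⬝ᵥ (Bᴴ * B) *ᵥ v = ((∑ R, ‖∑ Q, v Q * B R Q‖ ^ 2 : ℝ) : ℂ) := by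
    rw [← Matrix.mulVec_mulVec, Matrix.dotProduct_mulVec, ← Matrix.star_mulVec]
    have hBv : ∀ R, (B *ᵥ v) R = ∑ Q, v Q * B R Q := by
      intro R
      simp [Matrix.mulVec, dotProduct, mul_comm]
    simp only [dotProduct, Pi.star_apply, star_mul_self_eq']
    push_cast
    exact Finset.sum_congr rfl fun R _ => by rw [hBv]
  rw [E1, E2]
  push_cast
  rw [Finset.sum_sub_distrib]
  rw [smul_eq_mul, Finset.mul_sum]

lemma herm_aux (k d : ℕ) (μ : ℝ) (σ : Matrix (Fin k × Fin d) (Fin k × Fin d) ℂ)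
    (hσ : σ.IsHermitian) :
    (idTensor k d
      (fun σ => σ.trace • (1 : Matrix (Fin d) (Fin d) ℂ) - (μ : ℂ) • σ) σ).IsHermitian := by
  unfold Matrix.IsHermitian
  ext ⟨p, i⟩ ⟨q, j⟩
  simp only [Matrix.conjTranspose_apply, idTensor, Matrix.of_apply, Matrix.sub_apply,
    Matrix.smul_apply, Matrix.one_apply, smul_eq_mul, Matrix.trace, Matrix.diag]
  have h1 : star (∑ x, σ (q, x) (p, x)) = ∑ x, σ (p, x) (q, x) := by
    rw [star_sum]; exact Finset.sum_congr rfl fun x _ => hσ.apply _ _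
  have h2 : (star (if j = i then (1:ℂ) else 0)) = (if i = j then (1:ℂ) else 0) := by
    by_cases hij : i = j
    · simp [hij]
    · rw [if_neg hij, if_neg (fun hh : j = i => hij hh.symm)]
      exact star_zero _
  have h3 : star ((μ:ℂ)) = (μ:ℂ) := by
    simp [Complex.star_def, Complex.conj_ofReal]
  have h4 : star (σ (q, j) (p, i)) = σ (p, i) (q, j) := hσ.apply _ _
  rw [star_sub, star_mul', star_mul', h1, h2, h3, h4]

end Helpers

lemma count_lemma (d k : ℕ) (hkd : k ≤ d) :
    (∑ i : Fin d, (if (i:ℕ) < k then (1:ℝ) else 0)) = k := by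
  rw [Finset.sum_boole]
  congr 1
  have : (Finset.univ.filter fun i : Fin d => (i:ℕ) < k)
      = Finset.map (Fin.castLEEmb hkd) Finset.univ := by
    ext m
    simp only [Finset.mem_filter, Finset.mem_univ, true_and, Finset.mem_map,
      Fin.castLEEmb, Function.Embedding.coeFn_mk]
    constructor
    · intro hm
      exact ⟨⟨(m:ℕ), hm⟩, Fin.ext rfl⟩
    · rintro ⟨a, rfl⟩
      simpa using a.isLt
  rw [this, Finset.card_map, Finset.card_univ, Fintype.card_fin]

lemma g_eval (k d : ℕ) (hkd : k ≤ d) (i m : Fin d) :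
    (∑ q : Fin k, (if ((i:ℕ) = (q:ℕ)) then (1:ℂ) else 0) * (if ((m:ℕ) = (q:ℕ)) then 1 else 0))
      = if ((i:ℕ) < k ∧ (m:ℕ) = (i:ℕ)) then 1 else 0 := by
  by_cases hik : (i:ℕ) < k
  · rw [Finset.sum_eq_single (⟨(i:ℕ), hik⟩ : Fin k)]
    · by_cases hmi : (m:ℕ) = (i:ℕ) <;> simp [hik, hmi]
    · intro q _ hq
      have : ¬((i:ℕ) = (q:ℕ)) := fun hh => hq (Fin.ext hh.symm)
      simp [this]
    · simp
  · have hall : ∀ q : Fin k, ¬((i:ℕ) = (q:ℕ)) := fun q hh => hik (hh ▸ q.isLt)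
    simp [hall, hik]



/-- for μ ≥ 0 and 1 ≤ k ≤ d, the map Λ_μ(σ) = Tr(σ) I − μ σ
is k-positive iff μ ≤ 1/k. -/
theorem lambda_mu_kPositive_iff (d k : ℕ) (hk : 1 ≤ k) (hkd : k ≤ d)
    (μ : ℝ) (hμ : 0 ≤ μ) :
    kPositive k d
        (fun σ => σ.trace • (1 : Matrix (Fin d) (Fin d) ℂ) - (μ : ℂ) • σ)
      ↔ μ ≤ 1 / k := by
  have hk0 : (0:ℝ) < k := by exact_mod_cast hk
  constructor
  · intro h
    -- the maximally entangled test state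
    obtain ⟨B, hB⟩ : ∃ B : Matrix (Fin 1) (Fin k × Fin d) ℂ,
        B = Matrix.of fun _ Q => if ((Q.2 : ℕ) = (Q.1 : ℕ)) then 1 else 0 := ⟨_, rfl⟩
    have hσ := Matrix.posSemidef_conjTranspose_mul_self B
    have hT := h _ hσ
    have h0 := hT.dotProduct_mulVec_nonneg (fun Q => if ((Q.2 : ℕ) = (Q.1 : ℕ)) then 1 else 0)
    rw [expand_quadratic] at h0
    rw [Complex.zero_le_real, Fin.sum_univ_one, hB] at h0
    simp only [Matrix.of_apply] at h0
    have hcol : ∀ q : Fin k, (∑ m : Fin d, (if ((m:ℕ) = (q:ℕ)) then (1:ℂ) else 0)) = 1 := by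
      intro q
      have heq : ∀ m : Fin d, ((m:ℕ) = (q:ℕ)) ↔ m = Fin.castLE hkd q := by
        intro m; rw [Fin.ext_iff]; rfl
      simp_rw [heq]
      simp [Finset.sum_ite_eq']
    have hc : (∑ Q : Fin k × Fin d, (if ((Q.2:ℕ) = (Q.1:ℕ)) then (1:ℂ) else 0)
        * (if ((Q.2:ℕ) = (Q.1:ℕ)) then 1 else 0)) = (k : ℂ) := by
      rw [Fintype.sum_prod_type]
      have hcollapse : ∀ (q : Fin k) (m : Fin d),
          (if ((m:ℕ) = (q:ℕ)) then (1:ℂ) else 0) * (if ((m:ℕ) = (q:ℕ)) then 1 else 0)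
          = if ((m:ℕ) = (q:ℕ)) then (1:ℂ) else 0 := by
        intro q m; by_cases hm : (m:ℕ) = (q:ℕ) <;> simp [hm]
      calc ∑ q : Fin k, ∑ m : Fin d, (if ((m:ℕ) = (q:ℕ)) then (1:ℂ) else 0)
              * (if ((m:ℕ) = (q:ℕ)) then 1 else 0)
          = ∑ q : Fin k, ∑ m : Fin d, (if ((m:ℕ) = (q:ℕ)) then (1:ℂ) else 0) :=
            Finset.sum_congr rfl fun q _ => Finset.sum_congr rfl fun m _ => hcollapse q m
        _ = ∑ q : Fin k, 1 := Finset.sum_congr rfl fun q _ => hcol q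
        _ = (k : ℂ) := by simp
    have hterm1 : (∑ i : Fin d, ∑ m : Fin d, ‖∑ q : Fin k,
        (if ((i:ℕ) = (q:ℕ)) then (1:ℂ) else 0) * (if ((m:ℕ) = (q:ℕ)) then 1 else 0)‖ ^ 2)
        = (k : ℝ) := by
      have hrow : ∀ i : Fin d, (∑ m : Fin d, ‖(if ((i:ℕ) < k ∧ (m:ℕ) = (i:ℕ)) then (1:ℂ)
          else 0)‖ ^ 2) = if (i:ℕ) < k then (1:ℝ) else 0 := by
        intro i
        by_cases hik : (i:ℕ) < k
        · have heq : ∀ m : Fin d, ((i:ℕ) < k ∧ (m:ℕ) = (i:ℕ)) ↔ m = i := by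
            intro m
            constructor
            · rintro ⟨-, hm⟩; exact Fin.ext hm
            · rintro rfl; exact ⟨hik, rfl⟩
          simp_rw [heq]
          rw [if_pos hik]
          have : ∀ m : Fin d, ‖(if m = i then (1:ℂ) else 0)‖ ^ 2
              = if m = i then (1:ℝ) else 0 := by
            intro m; by_cases hm : m = i <;> simp [hm]
          rw [Finset.sum_congr rfl fun m _ => this m]
          simp [Finset.sum_ite_eq']
        · have : ∀ m : Fin d, ¬((i:ℕ) < k ∧ (m:ℕ) = (i:ℕ)) := fun m hm => hik hm.1
          simp [this, hik]
      calc (∑ i : Fin d, ∑ m : Fin d, ‖∑ q : Fin k,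
            (if ((i:ℕ) = (q:ℕ)) then (1:ℂ) else 0) * (if ((m:ℕ) = (q:ℕ)) then 1 else 0)‖ ^ 2)
          = ∑ i : Fin d, ∑ m : Fin d, ‖(if ((i:ℕ) < k ∧ (m:ℕ) = (i:ℕ)) then (1:ℂ) else 0)‖ ^ 2 :=
            Finset.sum_congr rfl fun i _ => Finset.sum_congr rfl fun m _ => by
              rw [g_eval k d hkd]
        _ = ∑ i : Fin d, (if (i:ℕ) < k then (1:ℝ) else 0) :=
            Finset.sum_congr rfl fun i _ => hrow i
        _ = (k : ℝ) := count_lemma d k hkd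
    rw [hterm1, hc] at h0
    rw [Complex.norm_natCast] at h0
    rw [le_div_iff₀ hk0]
    nlinarith [h0, hk0]
  · intro hμk σ hσ
    obtain ⟨B, rfl⟩ := Matrix.posSemidef_iff_eq_transpose_mul_self.mp hσ
    refine .of_dotProduct_mulVec_nonneg
      (herm_aux k d μ _ (Matrix.posSemidef_conjTranspose_mul_self B).isHermitian) fun v => ?_
    rw [expand_quadratic, Complex.zero_le_real]
    refine Finset.sum_nonneg fun R _ => ?_
    have hkey := key_sums' k d hk (fun q i => v (q, i)) (fun q m => B R (q, m))
    have hsplit : (∑ Q, v Q * B R Q) = ∑ q, ∑ m, v (q, m) * B R (q, m) :=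
      Fintype.sum_prod_type _
    rw [hsplit]
    have hnn : (0:ℝ) ≤ ‖∑ q, ∑ m, v (q, m) * B R (q, m)‖ ^ 2 := by positivity
    have h1 : μ * ‖∑ q, ∑ m, v (q, m) * B R (q, m)‖ ^ 2
        ≤ (1/k) * ‖∑ q, ∑ m, v (q, m) * B R (q, m)‖ ^ 2 :=
      mul_le_mul_of_nonneg_right hμk hnn
    have h2 : (1/(k:ℝ)) * ‖∑ q, ∑ m, v (q, m) * B R (q, m)‖ ^ 2
        ≤ (1/k) * ((k:ℝ) * ∑ i, ∑ m, ‖∑ q, v (q, i) * B R (q, m)‖ ^ 2) :=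
      mul_le_mul_of_nonneg_left hkey (by positivity)
    have h3 : (1/(k:ℝ)) * ((k:ℝ) * ∑ i, ∑ m, ‖∑ q, v (q, i) * B R (q, m)‖ ^ 2)
        = ∑ i, ∑ m, ‖∑ q, v (q, i) * B R (q, m)‖ ^ 2 := by
      field_simp
    linarith
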